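/- For every depth d and leaf families ℓ ℓ' : Fin (2^d) → α with ℓ ≠ ℓ', if mroot d ℓ = mroot d ℓ', then there exists a collision: either a pair x ≠ y with h x = h y, or a pair of pairs (a,b) ≠ (c,d) with H a b = H c d. (Constructive form: two distinct batches with the same Merkle root yield an explicit hash collision.) -/
import Mathlib


variable {α β : Type*}

/-- First half of a family of `2^(d+1)` leaves. -/
def half0 {d : ℕ} (ℓ : Fin (2 ^ (d + 1)) → α) : Fin (2 ^ d) → α :=
  fun i => ℓ ⟨i.val, by
    have hi := i.isLt
    have h2 : 2 ^ (d + 1) = 2 ^ d + 2 ^ d := by rw [pow_succ]; ring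
    omega⟩

/-- Second half of a family of `2^(d+1)` leaves. -/
def half1 {d : ℕ} (ℓ : Fin (2 ^ (d + 1)) → α) : Fin (2 ^ d) → α :=
  fun i => ℓ ⟨2 ^ d + i.val, by
    have hi := i.isLt
    have h2 : 2 ^ (d + 1) = 2 ^ d + 2 ^ d := by rw [pow_succ]; ring
    omega⟩

/-- Merkle root of a family of `2^d` leaves, with leaf hash `h` and node combiner `H`. -/
def mroot (h : α → β) (H : β → β → β) : (d : ℕ) → (Fin (2 ^ d) → α) → β
  | 0, ℓ => h (ℓ ⟨0, by positivity⟩)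
  | d + 1, ℓ => H (mroot h H d (half0 ℓ)) (mroot h H d (half1 ℓ))

lemma halves_ext {d : ℕ} (ℓ ℓ' : Fin (2 ^ (d + 1)) → α)
    (h0 : half0 ℓ = half0 ℓ') (h1 : half1 ℓ = half1 ℓ') : ℓ = ℓ' := by
  funext i
  have hi := i.isLt
  have h2 : 2 ^ (d + 1) = 2 ^ d + 2 ^ d := by rw [pow_succ]; ring
  by_cases hc : i.val < 2 ^ d
  · have := congrFun h0 ⟨i.val, hc⟩
    simpa [half0, Fin.ext_iff] using this
  · have hlt : i.val - 2 ^ d < 2 ^ d := by omega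
    have := congrFun h1 ⟨i.val - 2 ^ d, hlt⟩
    simp only [half1] at this
    have he : (⟨2 ^ d + (i.val - 2 ^ d), by omega⟩ : Fin (2 ^ (d+1))) = i := by
      simp [Fin.ext_iff]; omega
    rwa [he] at this

/-- Constructive form: two distinct batches with the same Merkle root yield an explicit
collision of `h` or of `H`. -/
theorem mroot_collision (h : α → β) (H : β → β → β)
    (d : ℕ) (ℓ ℓ' : Fin (2 ^ d) → α) (hne : ℓ ≠ ℓ')
    (hroot : mroot h H d ℓ = mroot h H d ℓ') :
    (∃ x y : α, x ≠ y ∧ h x = h y) ∨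
    (∃ a b c d' : β, (a, b) ≠ (c, d') ∧ H a b = H c d') := by
  induction d with
  | zero =>
    left
    refine ⟨ℓ ⟨0, by norm_num⟩, ℓ' ⟨0, by norm_num⟩, ?_, hroot⟩
    intro he
    apply hne
    funext i
    have : i = ⟨0, by norm_num⟩ := by
      ext; omega
    rw [this]; exact he
  | succ d ih =>
    simp only [mroot] at hroot
    by_cases h0 : mroot h H d (half0 ℓ) = mroot h H d (half0 ℓ')
    · by_cases h1 : mroot h H d (half1 ℓ) = mroot h H d (half1 ℓ')
      · by_cases hh0 : half0 ℓ = half0 ℓ'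
        · have hh1 : half1 ℓ ≠ half1 ℓ' := fun hh1 => hne (halves_ext ℓ ℓ' hh0 hh1)
          exact ih _ _ hh1 h1
        · exact ih _ _ hh0 h0
      · right
        exact ⟨_, _, _, _, fun he => h1 (congrArg Prod.snd he), hroot⟩
    · right
      exact ⟨_, _, _, _, fun he => h0 (congrArg Prod.fst he), hroot⟩
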